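/- Let N be an odd squarefree integer with ω(N) = 5 such that the smallest prime factor of N is at least 13 or the largest prime factor of N is greater than 3373. Then (10/(3π)) · ( ∏_{p prime, p ∣ N} (2 + p^{3/4})/(1 + p) + 3 · ∏_{p prime, p ∣ N} (2 + p^{1/2})/(1 + p) ) < 1/12. -/

import Mathlib

open Finset

/-- Bound `x ^ (3/4) ≤ c` from `x ^ 3 ≤ c ^ 4`. -/
lemma rpow34_le' {x c : ℝ} (hx : 0 ≤ x) (hc : 0 ≤ c) (h : x ^ (3:ℕ) ≤ c ^ (4:ℕ)) :
    x ^ ((3:ℝ)/4) ≤ c := by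
  have h1 : x ^ ((3:ℝ)/4) = (x ^ (3:ℕ)) ^ ((1:ℝ)/4) := by
    rw [← Real.rpow_natCast x 3, ← Real.rpow_mul hx]
    norm_num
  have h2 : c = (c ^ (4:ℕ)) ^ ((1:ℝ)/4) := by
    rw [← Real.rpow_natCast c 4, ← Real.rpow_mul hc]
    norm_num
  rw [h1, h2]
  exact Real.rpow_le_rpow (by positivity) h (by norm_num)

/-- Bound `x ^ (1/2) ≤ c` from `x ≤ c ^ 2`. -/
lemma rpow12_le' {x c : ℝ} (hx : 0 ≤ x) (hc : 0 ≤ c) (h : x ≤ c ^ (2:ℕ)) :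
    x ^ ((1:ℝ)/2) ≤ c := by
  have h2 : c = (c ^ (2:ℕ)) ^ ((1:ℝ)/2) := by
    rw [← Real.rpow_natCast c 2, ← Real.rpow_mul hc]
    norm_num
  rw [h2]
  exact Real.rpow_le_rpow hx h (by norm_num)

/-- The function `x ↦ (2 + x^r)/(1+x)` is antitone on `[1, ∞)` for `0 ≤ r ≤ 1`. -/
lemma factor_anti (r : ℝ) (hr1 : r ≤ 1) {a b : ℝ} (ha : 1 ≤ a) (hab : a ≤ b) :
    (2 + b ^ r) / (1 + b) ≤ (2 + a ^ r) / (1 + a) := by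
  have ha0 : (0:ℝ) < a := by linarith
  have hb0 : (0:ℝ) < b := by linarith
  rw [div_le_div_iff₀ (by linarith) (by linarith)]
  have har : a ^ r ≤ a := by
    calc a ^ r ≤ a ^ (1:ℝ) := Real.rpow_le_rpow_of_exponent_le ha hr1
    _ = a := Real.rpow_one a
  have h1 : b ^ r ≤ a ^ r + (b - a) := by
    have ht : 1 ≤ b / a := (one_le_div ha0).mpr hab
    have hba : a * (b / a) = b := by field_simp
    have key : b ^ r = a ^ r * (b/a) ^ r := by
      rw [← hba, Real.mul_rpow ha0.le (by positivity), hba]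
    have h3 : (b/a) ^ r ≤ b/a := by
      calc (b/a) ^ r ≤ (b/a) ^ (1:ℝ) := Real.rpow_le_rpow_of_exponent_le ht hr1
      _ = b / a := Real.rpow_one _
    have h4 : a ^ r * (b/a) ^ r ≤ a ^ r * (b/a) :=
      mul_le_mul_of_nonneg_left h3 (by positivity)
    have h6 : a ^ r * (b/a - 1) ≤ a * (b/a - 1) :=
      mul_le_mul_of_nonneg_right har (by linarith)
    have h7 : a * (b/a - 1) = b - a := by field_simp
    nlinarith [key, h4, h6, h7]
  have h2 : a * b ^ r ≤ a ^ r * b := by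
    have e1 : a ^ r * a ^ (1-r) = a := by
      rw [← Real.rpow_add ha0]; norm_num
    have e2 : b ^ r * b ^ (1-r) = b := by
      rw [← Real.rpow_add hb0]; norm_num
    have h8 : a ^ (1-r) ≤ b ^ (1-r) := Real.rpow_le_rpow ha0.le hab (by linarith)
    calc a * b ^ r = a ^ r * a ^ (1-r) * b ^ r := by rw [e1]
    _ ≤ a ^ r * b ^ (1-r) * b ^ r := by
        have := mul_le_mul_of_nonneg_left h8 (Real.rpow_nonneg ha0.le r)
        exact mul_le_mul_of_nonneg_right this (Real.rpow_nonneg hb0.le r)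
    _ = a ^ r * b := by rw [mul_assoc, mul_comm (b ^ (1-r)), e2]
  nlinarith [h1, h2, Real.rpow_nonneg hb0.le r]

/-- A product over a finset of naturals as a product over its sorted enumeration. -/
lemma prod_orderEmbOfFin' {s : Finset ℕ} {k : ℕ} (h : s.card = k) (f : ℕ → ℝ) :
    ∏ p ∈ s, f p = ∏ i : Fin k, f (s.orderEmbOfFin h i) := by
  refine (Finset.prod_bij (fun (i : Fin k) _ => s.orderEmbOfFin h i) ?_ ?_ ?_ ?_).symm
  · intro i _; exact Finset.orderEmbOfFin_mem s h i
  · intro i _ j _ hij; exact (s.orderEmbOfFin h).injective hij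
  · intro b hb
    have : b ∈ Set.range (s.orderEmbOfFin h) := by
      rw [Finset.range_orderEmbOfFin]; exact hb
    obtain ⟨i, hi⟩ := this
    exact ⟨i, Finset.mem_univ i, hi⟩
  · intro i _; rfl

lemma odd_of_mem_primeFactors {N p : ℕ} (hodd : Odd N) (hp : p ∈ N.primeFactors) : Odd p := by
  have hpp := Nat.prime_of_mem_primeFactors hp
  have hdvd := Nat.dvd_of_mem_primeFactors hp
  rcases hpp.eq_two_or_odd' with h2 | h
  · subst h2
    exact absurd ((even_iff_two_dvd).mpr hdvd) (Nat.not_even_iff_odd.mpr hodd)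
  · exact h

lemma step_prime {x : ℕ} (hp : x.Prime) (ho : Odd x) :
    (13 < x → 17 ≤ x) ∧ (17 < x → 19 ≤ x) ∧ (19 < x → 23 ≤ x) ∧ (23 < x → 29 ≤ x) ∧
    (3 < x → 5 ≤ x) ∧ (5 < x → 7 ≤ x) ∧ (7 < x → 11 ≤ x) := by
  have h2 := Nat.odd_iff.mp ho
  refine ⟨?_, ?_, ?_, ?_, ?_, ?_, ?_⟩ <;> intro h <;> by_contra hc <;> push_neg at hc <;>
    interval_cases x <;> first | omega | exact absurd hp (by norm_num)

/-- Generic product bound via the sorted enumeration. -/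
lemma key_prod {S : Finset ℕ} {k : ℕ} (h : S.card = k) (r : ℝ) (hr1 : r ≤ 1)
    (m c : Fin k → ℝ) (hm : ∀ i, 1 ≤ m i)
    (hle : ∀ i, m i ≤ ((S.orderEmbOfFin h i : ℕ) : ℝ))
    (hpow : ∀ i, (m i) ^ r ≤ c i) :
    ∏ p ∈ S, (2 + (p:ℝ) ^ r) / (1 + (p:ℝ)) ≤ ∏ i : Fin k, (2 + c i) / (1 + m i) := by
  rw [prod_orderEmbOfFin' h]
  apply Finset.prod_le_prod
  · intro i _
    have : (0:ℝ) ≤ ((S.orderEmbOfFin h i : ℕ) : ℝ) := Nat.cast_nonneg _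
    positivity
  · intro i _
    calc (2 + ((S.orderEmbOfFin h i : ℕ) : ℝ) ^ r) / (1 + ((S.orderEmbOfFin h i : ℕ) : ℝ))
        ≤ (2 + (m i) ^ r) / (1 + m i) := factor_anti r hr1 (hm i) (hle i)
      _ ≤ (2 + c i) / (1 + m i) := by
          have h1 : (0:ℝ) < 1 + m i := by linarith [hm i]
          gcongr
          exact hpow i

/-- For an odd squarefree integer `N` with exactly `5` distinct prime factors whose smallest
prime factor is at least `13` or whose largest prime factor is greater than `3373`, the key
inequality holds. -/
theorem key_inequality_omega_eq_5 (N : ℕ) (hodd : Odd N) (hsf : Squarefree N)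
    (hω : N.primeFactors.card = 5)
    (hP : (∀ p ∈ N.primeFactors, 13 ≤ p) ∨ (∃ p ∈ N.primeFactors, 3373 < p)) :
    10 / (3 * Real.pi) *
        ((∏ p ∈ N.primeFactors, (2 + (p : ℝ) ^ ((3 : ℝ) / 4)) / (1 + (p : ℝ))) +
          3 * ∏ p ∈ N.primeFactors, (2 + (p : ℝ) ^ ((1 : ℝ) / 2)) / (1 + (p : ℝ))) <
      1 / 12 := by
  have hπ : (3.141592 : ℝ) < Real.pi := Real.pi_gt_d6
  set F := ∏ p ∈ N.primeFactors, (2 + (p : ℝ) ^ ((3 : ℝ) / 4)) / (1 + (p : ℝ)) with hFdef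
  set G := ∏ p ∈ N.primeFactors, (2 + (p : ℝ) ^ ((1 : ℝ) / 2)) / (1 + (p : ℝ)) with hGdef
  have hsum : F + 3 * G ≤ 0.078 := by
    rcases hP with hall | ⟨q, hqmem, hq⟩
    · -- all prime factors are at least 13
      have hEmem : ∀ i : Fin 5, N.primeFactors.orderEmbOfFin hω i ∈ N.primeFactors :=
        fun i => Finset.orderEmbOfFin_mem N.primeFactors hω i
      have hEp : ∀ i : Fin 5, (N.primeFactors.orderEmbOfFin hω i).Prime :=
        fun i => Nat.prime_of_mem_primeFactors (hEmem i)
      have hEo : ∀ i : Fin 5, Odd (N.primeFactors.orderEmbOfFin hω i) :=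
        fun i => odd_of_mem_primeFactors hodd (hEmem i)
      have hsm := (N.primeFactors.orderEmbOfFin hω).strictMono
      have h0 : 13 ≤ N.primeFactors.orderEmbOfFin hω 0 := hall _ (hEmem 0)
      have h1 : 17 ≤ N.primeFactors.orderEmbOfFin hω 1 :=
        (step_prime (hEp 1) (hEo 1)).1
          (by have := hsm (show (0:Fin 5) < 1 by decide); omega)
      have h2 : 19 ≤ N.primeFactors.orderEmbOfFin hω 2 :=
        (step_prime (hEp 2) (hEo 2)).2.1
          (by have := hsm (show (1:Fin 5) < 2 by decide); omega)
      have h3 : 23 ≤ N.primeFactors.orderEmbOfFin hω 3 :=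
        (step_prime (hEp 3) (hEo 3)).2.2.1
          (by have := hsm (show (2:Fin 5) < 3 by decide); omega)
      have h4 : 29 ≤ N.primeFactors.orderEmbOfFin hω 4 :=
        (step_prime (hEp 4) (hEo 4)).2.2.2.1
          (by have := hsm (show (3:Fin 5) < 4 by decide); omega)
      have hF : F ≤ 0.051 := by
        calc F ≤ ∏ i : Fin 5,
            (2 + (![6.8464, 8.3722, 9.1005, 10.5026, 12.4968] : Fin 5 → ℝ) i) /
              (1 + (![13, 17, 19, 23, 29] : Fin 5 → ℝ) i) := by
              apply key_prod hω ((3:ℝ)/4) (by norm_num)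
              · intro i; fin_cases i <;> norm_num
              · intro i
                fin_cases i <;> simp <;>
                  [exact_mod_cast h0; exact_mod_cast h1; exact_mod_cast h2;
                   exact_mod_cast h3; exact_mod_cast h4]
              · intro i; fin_cases i <;> simp <;> apply rpow34_le' <;> norm_num
          _ ≤ 0.051 := by rw [Fin.prod_univ_five]; norm_num [Matrix.cons_val_two, Matrix.cons_val_three, Matrix.cons_val_four]
      have hG : G ≤ 0.00302 := by
        calc G ≤ ∏ i : Fin 5,
            (2 + (![3.6056, 4.1232, 4.3589, 4.7959, 5.3852] : Fin 5 → ℝ) i) /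
              (1 + (![13, 17, 19, 23, 29] : Fin 5 → ℝ) i) := by
              apply key_prod hω ((1:ℝ)/2) (by norm_num)
              · intro i; fin_cases i <;> norm_num
              · intro i
                fin_cases i <;> simp <;>
                  [exact_mod_cast h0; exact_mod_cast h1; exact_mod_cast h2;
                   exact_mod_cast h3; exact_mod_cast h4]
              · intro i
                fin_cases i <;> simp <;>
                  · rw [show ((2:ℝ)⁻¹) = 1/2 by norm_num]
                    apply rpow12_le' <;> norm_num
          _ ≤ 0.00302 := by rw [Fin.prod_univ_five]; norm_num [Matrix.cons_val_two, Matrix.cons_val_three, Matrix.cons_val_four]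
      linarith
    · -- some prime factor exceeds 3373
      have hqp : q.Prime := Nat.prime_of_mem_primeFactors hqmem
      have hq' : (3374:ℝ) ≤ (q:ℝ) := by exact_mod_cast (by omega : 3374 ≤ q)
      have hT : (N.primeFactors.erase q).card = 4 := by
        rw [Finset.card_erase_of_mem hqmem, hω]
      have hEmem : ∀ i : Fin 4,
          (N.primeFactors.erase q).orderEmbOfFin hT i ∈ N.primeFactors :=
        fun i => Finset.mem_of_mem_erase (Finset.orderEmbOfFin_mem _ hT i)
      have hEp : ∀ i : Fin 4, ((N.primeFactors.erase q).orderEmbOfFin hT i).Prime :=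
        fun i => Nat.prime_of_mem_primeFactors (hEmem i)
      have hEo : ∀ i : Fin 4, Odd ((N.primeFactors.erase q).orderEmbOfFin hT i) :=
        fun i => odd_of_mem_primeFactors hodd (hEmem i)
      have hsm := ((N.primeFactors.erase q).orderEmbOfFin hT).strictMono
      have h0 : 3 ≤ (N.primeFactors.erase q).orderEmbOfFin hT 0 := by
        have := (hEp 0).two_le
        have := Nat.odd_iff.mp (hEo 0)
        omega
      have h1 : 5 ≤ (N.primeFactors.erase q).orderEmbOfFin hT 1 :=
        (step_prime (hEp 1) (hEo 1)).2.2.2.2.1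
          (by have := hsm (show (0:Fin 4) < 1 by decide); omega)
      have h2 : 7 ≤ (N.primeFactors.erase q).orderEmbOfFin hT 2 :=
        (step_prime (hEp 2) (hEo 2)).2.2.2.2.2.1
          (by have := hsm (show (1:Fin 4) < 2 by decide); omega)
      have h3 : 11 ≤ (N.primeFactors.erase q).orderEmbOfFin hT 3 :=
        (step_prime (hEp 3) (hEo 3)).2.2.2.2.2.2
          (by have := hsm (show (2:Fin 4) < 3 by decide); omega)
      have hFT : ∏ p ∈ N.primeFactors.erase q, (2 + (p:ℝ) ^ ((3:ℝ)/4)) / (1 + (p:ℝ))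
          ≤ 0.5031 := by
        calc _ ≤ ∏ i : Fin 4,
            (2 + (![2.2796, 3.3438, 4.3036, 6.0402] : Fin 4 → ℝ) i) /
              (1 + (![3, 5, 7, 11] : Fin 4 → ℝ) i) := by
              apply key_prod hT ((3:ℝ)/4) (by norm_num)
              · intro i; fin_cases i <;> norm_num
              · intro i
                fin_cases i <;> simp <;>
                  [exact_mod_cast h0; exact_mod_cast h1; exact_mod_cast h2;
                   exact_mod_cast h3]
              · intro i; fin_cases i <;> simp <;> apply rpow34_le' <;> norm_num
          _ ≤ 0.5031 := by rw [Fin.prod_univ_four]; norm_num [Matrix.cons_val_two, Matrix.cons_val_three]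
      have hGT : ∏ p ∈ N.primeFactors.erase q, (2 + (p:ℝ) ^ ((1:ℝ)/2)) / (1 + (p:ℝ))
          ≤ 0.1695 := by
        calc _ ≤ ∏ i : Fin 4,
            (2 + (![1.7321, 2.2361, 2.6458, 3.3167] : Fin 4 → ℝ) i) /
              (1 + (![3, 5, 7, 11] : Fin 4 → ℝ) i) := by
              apply key_prod hT ((1:ℝ)/2) (by norm_num)
              · intro i; fin_cases i <;> norm_num
              · intro i
                fin_cases i <;> simp <;>
                  [exact_mod_cast h0; exact_mod_cast h1; exact_mod_cast h2;
                   exact_mod_cast h3]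
              · intro i
                fin_cases i <;> simp <;>
                  · rw [show ((2:ℝ)⁻¹) = 1/2 by norm_num]
                    apply rpow12_le' <;> norm_num
          _ ≤ 0.1695 := by rw [Fin.prod_univ_four]; norm_num [Matrix.cons_val_two, Matrix.cons_val_three]
      have hfq : (2 + (q:ℝ) ^ ((3:ℝ)/4)) / (1 + (q:ℝ)) ≤ 444.70 / 3375 := by
        calc (2 + (q:ℝ) ^ ((3:ℝ)/4)) / (1 + (q:ℝ))
            ≤ (2 + (3374:ℝ) ^ ((3:ℝ)/4)) / (1 + 3374) :=
              factor_anti _ (by norm_num) (by norm_num) hq'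
          _ ≤ 444.70 / 3375 := by
              have : (3374:ℝ) ^ ((3:ℝ)/4) ≤ 442.70 := by
                apply rpow34_le' <;> norm_num
              rw [div_le_div_iff₀ (by norm_num) (by norm_num)]
              nlinarith
      have hgq : (2 + (q:ℝ) ^ ((1:ℝ)/2)) / (1 + (q:ℝ)) ≤ 60.087 / 3375 := by
        calc (2 + (q:ℝ) ^ ((1:ℝ)/2)) / (1 + (q:ℝ))
            ≤ (2 + (3374:ℝ) ^ ((1:ℝ)/2)) / (1 + 3374) :=
              factor_anti _ (by norm_num) (by norm_num) hq'
          _ ≤ 60.087 / 3375 := by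
              have : (3374:ℝ) ^ ((1:ℝ)/2) ≤ 58.087 := by
                apply rpow12_le' <;> norm_num
              rw [div_le_div_iff₀ (by norm_num) (by norm_num)]
              nlinarith
      have hFTpos : (0:ℝ) ≤ ∏ p ∈ N.primeFactors.erase q,
          (2 + (p:ℝ) ^ ((3:ℝ)/4)) / (1 + (p:ℝ)) := by
        apply Finset.prod_nonneg
        intro p _
        positivity
      have hGTpos : (0:ℝ) ≤ ∏ p ∈ N.primeFactors.erase q,
          (2 + (p:ℝ) ^ ((1:ℝ)/2)) / (1 + (p:ℝ)) := by
        apply Finset.prod_nonneg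
        intro p _
        positivity
      have hF : F ≤ 444.70 / 3375 * 0.5031 := by
        rw [hFdef, ← Finset.mul_prod_erase N.primeFactors _ hqmem]
        exact mul_le_mul hfq hFT hFTpos (by norm_num)
      have hG : G ≤ 60.087 / 3375 * 0.1695 := by
        rw [hGdef, ← Finset.mul_prod_erase N.primeFactors _ hqmem]
        exact mul_le_mul hgq hGT hGTpos (by norm_num)
      linarith
  have hsumpos : (0:ℝ) ≤ F + 3 * G := by
    have hF0 : (0:ℝ) ≤ F := by
      rw [hFdef]; apply Finset.prod_nonneg; intro p _; positivity
    have hG0 : (0:ℝ) ≤ G := by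
      rw [hGdef]; apply Finset.prod_nonneg; intro p _; positivity
    linarith
  calc 10 / (3 * Real.pi) * (F + 3 * G)
      ≤ 10 / (3 * 3.141592) * 0.078 := by
        apply mul_le_mul ?_ hsum hsumpos (by norm_num)
        apply div_le_div_of_nonneg_left (by norm_num) (by norm_num)
        nlinarith
    _ < 1 / 12 := by norm_num
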